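/- arXiv:2404.11648 — 2 statements merged into one kernel-verified Lean document; each statement's English description precedes it below -/
import Mathlib

section
/- Let m be odd and let F be a multilinear polynomial in vectors e_1,…,e_m (with coefficients depending polynomially on momenta p_a), decomposed as F = Σ_{k} Σ_{ρ∈𝔖_k} ∏_{(ab)∈ρ} ⟨e_a,e_b⟩ F^ρ where each F^ρ depends only on the ⟨e_a,p_b⟩ and ⟨p_a,p_b⟩. If F satisfies the gauge-invariance relation F^ρ|_{e_j→p_j} = -Σ_{i∉ρ, i≠j} ⟨e_i,e_j⟩ F^{ρ⊔(ij)}|_{e_j→p_j} for every j ∉ ρ, then for any single-element set I = {j} the dimensionally reduced value Σ_{ρ∈(𝔖_{(m-1)/2}|I)} (-1)^{(m-1)/2} ∏_{(ab)∈ρ} ⟨p_a,p_b⟩ F^ρ|_{e→p} vanishes. -/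
open scoped Classical

/-- The support of a set of ordered pairs: all indices occurring in some pair. -/
def psupp {m : ℕ} (ρ : Finset (Fin m × Fin m)) : Finset (Fin m) :=
  ρ.image Prod.fst ∪ ρ.image Prod.snd

/-- `ρ` is a partition of its support into disjoint unordered pairs,
each pair being represented by the ordered pair `(a, b)` with `a < b`. -/
def IsPairing {m : ℕ} (ρ : Finset (Fin m × Fin m)) : Prop :=
  (∀ q ∈ ρ, q.1 < q.2) ∧
  ∀ q ∈ ρ, ∀ q' ∈ ρ, q ≠ q' →
    q.1 ≠ q'.1 ∧ q.1 ≠ q'.2 ∧ q.2 ≠ q'.1 ∧ q.2 ≠ q'.2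

/-- The unordered pair `(i j)` represented with increasing components. -/
def mkPair {m : ℕ} (i j : Fin m) : Fin m × Fin m := if i < j then (i, j) else (j, i)

/-- The substitution `e_a → p_a` for all `a ∈ J`, leaving the other `e_a` unchanged. -/
noncomputable def subst {m : ℕ} {V : Type*} (p : Fin m → V) (J : Finset (Fin m))
    (e : Fin m → V) : Fin m → V := fun a => if a ∈ J then p a else e a

/-- For an odd number `m` of gauge particles, if the blocks `F^ρ` of a multilinear
gauge-invariant function satisfy the Ward identity
`F^ρ|_{e_j→p_j} = -Σ_{i∉ρ, i≠j} ⟨e_i, e_j⟩ F^{ρ⊔(ij)}|_{e_j→p_j}`,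
then for any singleton `I = {j}` the dimensionally reduced value
`Σ_{ρ∈(𝔖_{(m-1)/2}|I)} (-1)^{(m-1)/2} Π_{(ab)∈ρ} ⟨p_a, p_b⟩ F^ρ|_{e→p}` vanishes;
here `(𝔖_{(m-1)/2}|I)` consists of the pair partitions `ρ` with
`I = {1,…,m}\{j} ⊆ supp ρ` (hence `supp ρ = I`) and every pair of `ρ` meeting `I`. -/
theorem dimensional_reduction_vanishes_of_odd {m : ℕ} {V R : Type*} [CommRing R]
    (hm : Odd m)
    (B : V → V → R) (p : Fin m → V)
    (F : Finset (Fin m × Fin m) → (Fin m → V) → R)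
    (ward : ∀ ρ : Finset (Fin m × Fin m), IsPairing ρ →
      ∀ j ∉ psupp ρ, ∀ e : Fin m → V,
        F ρ (subst p {j} e) =
          - ∑ i ∈ (Finset.univ \ psupp ρ).erase j,
              B (subst p {j} e i) (subst p {j} e j) *
                F (insert (mkPair i j) ρ) (subst p {j} e)) :
    ∀ j : Fin m,
      (∑ ρ : Finset (Fin m × Fin m),
        if IsPairing ρ ∧ ρ.card = (m - 1) / 2 ∧ Finset.univ.erase j ⊆ psupp ρ ∧
            (∀ q ∈ ρ, q.1 ∈ Finset.univ.erase j ∨ q.2 ∈ Finset.univ.erase j) then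
          (-1 : R) ^ ((m - 1) / 2) * (∏ q ∈ ρ, B (p q.1) (p q.2)) * F ρ p
        else 0) = 0 := by
  intro j
  apply Finset.sum_eq_zero
  intro ρ _
  split_ifs with h
  · obtain ⟨hpair, hcard, hsub, -⟩ := h
    obtain ⟨k, hk⟩ := hm
    have hsupp_le : (psupp ρ).card ≤ m - 1 := by
      have h1 : (psupp ρ).card ≤ ρ.card + ρ.card :=
        le_trans (Finset.card_union_le _ _)
          (add_le_add Finset.card_image_le Finset.card_image_le)
      omega
    have heq : Finset.univ.erase j = psupp ρ :=
      Finset.eq_of_subset_of_card_le hsub (by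
        rw [Finset.card_erase_of_mem (Finset.mem_univ j), Finset.card_univ,
          Fintype.card_fin]
        exact hsupp_le)
    have hj : j ∉ psupp ρ := heq ▸ Finset.notMem_erase j _
    have hw := ward ρ hpair j hj p
    have hsubst : subst p {j} p = p := funext fun a => by simp [subst]
    rw [hsubst] at hw
    have hF : F ρ p = 0 := by
      rw [hw, Finset.sum_eq_zero, neg_zero]
      intro i hi
      exfalso
      rw [Finset.mem_erase, Finset.mem_sdiff, ← heq, Finset.mem_erase] at hi
      tauto
    rw [hF, mul_zero]
  · rfl
end

section
/- Weighted matrix-tree identity at 4 points: with z_5 fixed (terms containing z_{i5} omitted as z_5 → ∞), det(Ã_{{3,4}})·PT(1,2,5) equals the sum over all labelled trees on nodes {1,2,3,4} containing the edge (1,2): s_{13}s_{14}/(z_{12}z_{31}z_{41}) + s_{23}s_{14}/(z_{12}z_{32}z_{41}) + s_{34}s_{14}/(z_{12}z_{34}z_{41}) + s_{13}s_{24}/(z_{12}z_{31}z_{42}) + s_{23}s_{24}/(z_{12}z_{32}z_{42}) + s_{24}s_{34}/(z_{12}z_{34}z_{42}) + s_{13}s_{34}/(z_{12}z_{31}z_{43})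 + s_{23}s_{34}/(z_{12}z_{32}z_{43}), where Ã_{{3,4}} is the 2×2 submatrix of Ã = A - E on indices {3,4} with V_i restricted to j ∈ {1,2,3,4}, and PT(1,2,5) is taken as 1/z_{12} (dropping z_{25}, z_{51}). -/
open Finset


/-- `V_i = Σ_{j≠i} s_{ij}/(z_i - z_j)`, with `j` ranging over the four nodes. -/
noncomputable def V4 (s : Fin 4 → Fin 4 → ℂ) (z : Fin 4 → ℂ) (i : Fin 4) : ℂ :=
  ∑ j ∈ univ.erase i, s i j / (z i - z j)

theorem aux_mtft (p q r t u a b c d e f : ℂ) :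
  (-(p / b + (q / c + u / d)) * -(r / e + (t / f + u / -d)) - u / d * -(u / d)) *
      (1 / a) =
    p * r / (a * b * e) + q * r / (a * c * e) + u * r / (a * d * e) +
              p * t / (a * b * f) +
            q * t / (a * c * f) +
          t * u / (a * d * f) +
        p * u / (a * b * -d) +
      q * u / (a * c * -d) := by ring

/-- Weighted matrix-tree identity at 4 points (indices `0,…,3` standing for
`1,…,4`, with `z₅` already sent to infinity): `det(Ã_{{3,4}})·PT(1,2,5)` equals
the sum over all labelled trees on `{1,2,3,4}` containing the edge `(1,2)`. -/
theorem matrix_tree_four_point (z : Fin 4 → ℂ) (hz : Function.Injective z)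
    (s : Fin 4 → Fin 4 → ℂ) (hs : ∀ i j, s i j = s j i) :
    Matrix.det !![-(V4 s z 2), s 2 3 / (z 2 - z 3);
                  -(s 2 3 / (z 2 - z 3)), -(V4 s z 3)] * (1 / (z 0 - z 1)) =
        s 0 2 * s 0 3 / ((z 0 - z 1) * (z 2 - z 0) * (z 3 - z 0))
      + s 1 2 * s 0 3 / ((z 0 - z 1) * (z 2 - z 1) * (z 3 - z 0))
      + s 2 3 * s 0 3 / ((z 0 - z 1) * (z 2 - z 3) * (z 3 - z 0))
      + s 0 2 * s 1 3 / ((z 0 - z 1) * (z 2 - z 0) * (z 3 - z 1))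
      + s 1 2 * s 1 3 / ((z 0 - z 1) * (z 2 - z 1) * (z 3 - z 1))
      + s 1 3 * s 2 3 / ((z 0 - z 1) * (z 2 - z 3) * (z 3 - z 1))
      + s 0 2 * s 2 3 / ((z 0 - z 1) * (z 2 - z 0) * (z 3 - z 2))
      + s 1 2 * s 2 3 / ((z 0 - z 1) * (z 2 - z 1) * (z 3 - z 2)) := by

  have h01 : z 0 - z 1 ≠ 0 := sub_ne_zero.2 (fun h => by exact absurd (hz h) (by decide))
  have h20 : z 2 - z 0 ≠ 0 := sub_ne_zero.2 (fun h => by exact absurd (hz h) (by decide))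
  have h21 : z 2 - z 1 ≠ 0 := sub_ne_zero.2 (fun h => by exact absurd (hz h) (by decide))
  have h23 : z 2 - z 3 ≠ 0 := sub_ne_zero.2 (fun h => by exact absurd (hz h) (by decide))
  have h30 : z 3 - z 0 ≠ 0 := sub_ne_zero.2 (fun h => by exact absurd (hz h) (by decide))
  have h31 : z 3 - z 1 ≠ 0 := sub_ne_zero.2 (fun h => by exact absurd (hz h) (by decide))
  have h32 : z 3 - z 2 ≠ 0 := sub_ne_zero.2 (fun h => by exact absurd (hz h) (by decide))
  simp only [V4, Matrix.det_fin_two_of, show (univ.erase (2 : Fin 4)) = {0, 1, 3} from by decide,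
    show (univ.erase (3 : Fin 4)) = {0, 1, 2} from by decide, sum_insert, sum_singleton,
    mem_insert, mem_singleton]
  rw [sum_insert (by decide), sum_insert (by decide), sum_singleton,
    sum_insert (by decide), sum_insert (by decide), sum_singleton, hs 2 0, hs 2 1,
    hs 3 0, hs 3 1, hs 3 2]
  rw [show z 3 - z 2 = -(z 2 - z 3) from by ring]
  exact aux_mtft _ _ _ _ _ _ _ _ _ _ _
end
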